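/- Let H be a finite-dimensional real inner product space. The map F : H∖{0} → ℝ ⊕ H ⊕ Sym(H), F(x) = ‖x‖^{1/2}(1, ‖x‖^{-1}x, ‖x‖^{-2} x x*), is an isometric immersion when the codomain carries the metric (5/2)g_ℝ ⊕ g_H ⊕ (1/2)g_{L(H)} and the domain carries g_x(v,w) = (2/‖x‖)⟨v,w⟩ − (1/‖x‖³)⟨v,x⟩⟨x,w⟩. Concretely: the Fréchet derivative DF_x satisfies (5/2)(D(‖·‖^{1/2})_x v)(D(‖·‖^{1/2})_x w) + ⟨D(‖·‖^{-1/2}·)_x v, D(‖·‖^{-1/2}·)_x w⟩ + (1/2)⟨D(‖·‖^{-3/2}(··*))_x v, D(‖·‖^{-3/2}(··*))_x w⟩_{HS} = g_x(v,w) for all v, w ∈ H. -/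

import Mathlib

open RealInnerProductSpace

section
variable {H : Type*} [NormedAddCommGroup H] [InnerProductSpace ℝ H]


lemma aux_hasFDerivAt_norm_rpow (x : H) (hx : x ≠ 0) (p : ℝ) :
    HasFDerivAt (fun y : H => ‖y‖ ^ p)
      ((p * ‖x‖ ^ (p - 2)) • (innerSL ℝ x : H →L[ℝ] ℝ)) x := by
  have hr : (0:ℝ) < ‖x‖ := norm_pos_iff.2 hx
  have hinner : HasFDerivAt (fun y : H => (⟪y, y⟫ : ℝ))
      ((fderivInnerCLM ℝ (x, x)).comp
        ((ContinuousLinearMap.id ℝ H).prod (ContinuousLinearMap.id ℝ H))) x :=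
    (hasFDerivAt_id x).inner ℝ (hasFDerivAt_id x)
  have hne : (⟪x, x⟫ : ℝ) ≠ 0 := by
    rw [real_inner_self_eq_norm_sq]; positivity
  have hpow : HasDerivAt (fun t : ℝ => t ^ (p/2))
      ((p/2) * (⟪x, x⟫ : ℝ) ^ (p/2 - 1)) (⟪x, x⟫ : ℝ) :=
    Real.hasDerivAt_rpow_const (Or.inl hne)
  have hcomp := hpow.comp_hasFDerivAt (f := fun y : H => (⟪y, y⟫ : ℝ)) x hinner
  have hfun : (fun y : H => ‖y‖ ^ p) = fun y : H => (⟪y, y⟫ : ℝ) ^ (p/2) := by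
    funext y
    rw [real_inner_self_eq_norm_sq, ← Real.rpow_natCast (‖y‖) 2,
      ← Real.rpow_mul (norm_nonneg y)]
    norm_num [show (2:ℝ) * (p/2) = p from by ring]
  rw [hfun]
  refine hcomp.congr_fderiv ?_
  ext z
  simp only [ContinuousLinearMap.smul_apply, ContinuousLinearMap.coe_smul',
    Pi.smul_apply, ContinuousLinearMap.coe_comp', Function.comp_apply,
    ContinuousLinearMap.prod_apply, ContinuousLinearMap.coe_id', id,
    fderivInnerCLM_apply, smul_eq_mul, innerSL_apply_apply]
  rw [real_inner_self_eq_norm_sq, ← Real.rpow_natCast (‖x‖) 2,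
    ← Real.rpow_mul (norm_nonneg x)]
  rw [real_inner_comm z x]
  rw [show ((2:ℕ):ℝ) * (p/2 - 1) = p - 2 by push_cast; ring]
  ring


noncomputable def rk (a b : H) : H →L[ℝ] H := (innerSL ℝ a).smulRight b

lemma rk_apply (a b z : H) : rk a b z = ⟪a, z⟫ • b := rfl

lemma rk_comp (a b c d : H) :
    (rk a b : H →ₗ[ℝ] H) ∘ₗ (rk c d : H →ₗ[ℝ] H) = ⟪a, d⟫ • (rk c b : H →ₗ[ℝ] H) := by
  ext z
  simp [rk, smul_smul, real_inner_smul_right]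
  rw [mul_comm]

lemma trace_rk [FiniteDimensional ℝ H] (a b : H) :
    LinearMap.trace ℝ H ((rk a b : H →L[ℝ] H) : H →ₗ[ℝ] H) = ⟪a, b⟫ := by
  classical
  let e := stdOrthonormalBasis ℝ H
  rw [LinearMap.trace_eq_matrix_trace ℝ e.toBasis]
  rw [Matrix.trace]
  have : ∀ i, (LinearMap.toMatrix e.toBasis e.toBasis ((rk a b : H →L[ℝ] H) : H →ₗ[ℝ] H)).diag i
      = ⟪a, e i⟫ * ⟪e i, b⟫ := by
    intro i
    simp [Matrix.diag, LinearMap.toMatrix_apply, rk_apply, e.coe_toBasis_repr_apply,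
      e.repr_apply_apply, real_inner_smul_right, mul_comm]
  rw [Finset.sum_congr rfl (fun i _ => this i)]
  exact e.sum_inner_mul_inner a b


end

set_option maxHeartbeats 1000000
set_option synthInstance.maxHeartbeats 400000

/-- the map `F(x) = ‖x‖^{1/2}(1, ‖x‖⁻¹x, ‖x‖⁻²xx*)` is an
isometric immersion from `(H∖{0}, g)` into
`(ℝ ⊕ H ⊕ Sym(H), (5/2)g_ℝ ⊕ g_H ⊕ (1/2)g_{L(H)})`, where
`g_x(v,w) = (2/‖x‖)⟨v,w⟩ − (1/‖x‖³)⟨v,x⟩⟨x,w⟩` and the inner product on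
operators is the Hilbert–Schmidt one, `⟨S,T⟩ = Tr(S∘T)`. -/
theorem stmt_16 {H : Type*} [NormedAddCommGroup H] [InnerProductSpace ℝ H]
    [FiniteDimensional ℝ H] (x : H) (hx : x ≠ 0) (v w : H) :
    (5 / 2) * (fderiv ℝ (fun y : H => ‖y‖ ^ ((1 : ℝ) / 2)) x v *
        fderiv ℝ (fun y : H => ‖y‖ ^ ((1 : ℝ) / 2)) x w) +
      ⟪fderiv ℝ (fun y : H => (‖y‖ ^ (-(1 : ℝ) / 2)) • y) x v,
        fderiv ℝ (fun y : H => (‖y‖ ^ (-(1 : ℝ) / 2)) • y) x w⟫ +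
      (1 / 2) * LinearMap.trace ℝ H
        ((fderiv ℝ
            (fun y : H => (‖y‖ ^ (-(3 : ℝ) / 2)) • ((innerSL ℝ y).smulRight y))
            x v).toLinearMap ∘ₗ
          (fderiv ℝ
            (fun y : H => (‖y‖ ^ (-(3 : ℝ) / 2)) • ((innerSL ℝ y).smulRight y))
            x w).toLinearMap) =
      (2 / ‖x‖) * ⟪v, w⟫ - (1 / ‖x‖ ^ 3) * (⟪v, x⟫ * ⟪x, w⟫) := by

  have hr : (0:ℝ) < ‖x‖ := norm_pos_iff.2 hx
  -- derivative of part 1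
  have h1 := aux_hasFDerivAt_norm_rpow x hx ((1:ℝ)/2)
  -- derivative of part 2
  have h2 := (aux_hasFDerivAt_norm_rpow x hx (-(1:ℝ)/2)).smul (hasFDerivAt_id x)
  -- derivative of part 3
  set L : H →L[ℝ] H →L[ℝ] H →L[ℝ] H :=
    (ContinuousLinearMap.smulRightL ℝ H H).comp (innerSL ℝ) with hL
  have hT : HasFDerivAt (fun y : H => (innerSL ℝ y).smulRight y)
      ((L x).comp (ContinuousLinearMap.id ℝ H) + L.flip x) x :=
    (L.hasFDerivAt).clm_apply (hasFDerivAt_id x)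
  have h3 := (aux_hasFDerivAt_norm_rpow x hx (-(3:ℝ)/2)).smul hT
  have h2' : HasFDerivAt (fun y : H => ‖y‖ ^ (-(1:ℝ)/2) • y)
      (‖x‖ ^ (-(1:ℝ)/2) • ContinuousLinearMap.id ℝ H +
        ((-(1:ℝ)/2 * ‖x‖ ^ (-(1:ℝ)/2 - 2)) • (innerSL ℝ x : H →L[ℝ] ℝ)).smulRight x) x := h2
  rw [h1.fderiv, h2'.fderiv, (show HasFDerivAt
      (fun y : H => ‖y‖ ^ (-(3:ℝ)/2) • ((innerSL ℝ y).smulRight y)) _ x from h3).fderiv]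
  -- applications of derivatives
  have hA : ∀ u : H,
      ((‖x‖ ^ (-(3:ℝ)/2)) • ((L x).comp (ContinuousLinearMap.id ℝ H) + L.flip x)
        + ((-(3:ℝ)/2 * ‖x‖ ^ (-(3:ℝ)/2 - 2)) • (innerSL ℝ x : H →L[ℝ] ℝ)).smulRight
            ((innerSL ℝ x).smulRight x)) u
      = (‖x‖ ^ (-(3:ℝ)/2)) • (rk x u + rk u x)
        + (-(3:ℝ)/2 * ‖x‖ ^ (-(3:ℝ)/2 - 2) * ⟪x, u⟫) • rk x x := by
    intro u
    ext z
    simp [hL, rk, ContinuousLinearMap.smulRightL, real_inner_smul_right, smul_smul,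
      mul_comm, mul_left_comm, add_comm, add_left_comm]
  rw [hA v, hA w]
  -- compute the trace
  simp only [ContinuousLinearMap.coe_add, ContinuousLinearMap.coe_smul, smul_add,
    LinearMap.add_comp, LinearMap.comp_add, LinearMap.smul_comp, LinearMap.comp_smul,
    map_add, map_smul, rk_comp, trace_rk, smul_eq_mul]
  -- compute the first two parts
  simp only [ContinuousLinearMap.add_apply, ContinuousLinearMap.smul_apply,
    ContinuousLinearMap.smulRight_apply, ContinuousLinearMap.coe_id', id_eq,
    innerSL_apply_apply, smul_eq_mul, inner_add_left, inner_add_right,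
    real_inner_smul_left, real_inner_smul_right]
  -- normalize inner products
  rw [real_inner_comm v x, real_inner_comm w x, real_inner_comm w v,
    real_inner_self_eq_norm_sq x]
  -- switch to powers of t := ‖x‖ ^ (1/2)
  set t : ℝ := ‖x‖ ^ ((1:ℝ)/2) with htdef
  have ht : (0:ℝ) < t := Real.rpow_pos_of_pos hr _
  have key : ∀ (a : ℝ) (n : ℕ), 2 * a = -(n:ℝ) → ‖x‖ ^ a = (t ^ n)⁻¹ := by
    intro a n h
    rw [show a = ((1:ℝ)/2) * (2 * a) by ring, h, Real.rpow_mul (norm_nonneg x),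
      Real.rpow_neg (Real.rpow_nonneg (norm_nonneg x) _), Real.rpow_natCast]
  have hxt : ‖x‖ = t ^ 2 := by
    rw [htdef, ← Real.rpow_natCast (‖x‖ ^ ((1:ℝ)/2)) 2, ← Real.rpow_mul (norm_nonneg x)]
    norm_num
  rw [key ((1:ℝ)/2 - 2) 3 (by norm_num), key (-(1:ℝ)/2) 1 (by norm_num),
    key (-(1:ℝ)/2 - 2) 5 (by norm_num), key (-(3:ℝ)/2) 3 (by norm_num),
    key (-(3:ℝ)/2 - 2) 7 (by norm_num), hxt]
  have ht' : t ≠ 0 := ne_of_gt ht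
  field_simp
  ring
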